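/- Let m ≥ 1 and let s be an m×m complex matrix whose spectrum lies in the open unit disk. Then there exists a unique pair of real numbers (a, b) with a > 0 such that, setting α = (a + a⁻¹) + b·i and β = b + (a - a⁻¹)·i, the matrix conj(β)·s + conj(α)·1 is invertible and the matrix (α·s + β·1)·(conj(β)·s + conj(α)·1)⁻¹ has trace zero. -/

import Mathlib

open Matrix

open Complex Finset

set_option maxHeartbeats 1000000

local notation "conj'" => (starRingEnd ℂ)

namespace HingeAux

lemma normSq_lt_one_of_abs {z : ℂ} (h : ‖z‖ < 1) : normSq z < 1 := by
  have h0 := norm_nonneg z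
  nlinarith [Complex.sq_norm z]

lemma abs_lt_one_of_normSq {z : ℂ} (h : normSq z < 1) : ‖z‖ < 1 := by
  have h0 := norm_nonneg z
  nlinarith [Complex.sq_norm z]

lemma denom_ne {l z : ℂ} (hl : normSq l < 1) (hz : normSq z < 1) : 1 + l * z ≠ 0 := by
  intro h
  have h1 : l * z = -1 := by linear_combination h
  have h2 : normSq (l * z) = 1 := by rw [h1]; simp
  rw [Complex.normSq_mul] at h2
  nlinarith [Complex.normSq_nonneg l, Complex.normSq_nonneg z]

lemma mobius_normSq (l z : ℂ) :
    normSq (1 + l * z) - normSq (l + conj' z) = (1 - normSq l) * (1 - normSq z) := by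
  simp only [Complex.normSq_apply, Complex.add_re, Complex.add_im, Complex.mul_re,
    Complex.mul_im, Complex.one_re, Complex.one_im, Complex.conj_re, Complex.conj_im]
  ring

lemma normSq_mobius_lt_one {l z : ℂ} (hl : normSq l < 1) (hz : normSq z < 1) :
    normSq ((l + conj' z) / (1 + l * z)) < 1 := by
  rw [Complex.normSq_div]
  have h0 : 0 < normSq (1 + l * z) := Complex.normSq_pos.2 (denom_ne hl hz)
  rw [div_lt_one h0]
  nlinarith [mobius_normSq l z]

/-- The key strict inequality : for `|w|² < R < 1`, `Re ((w-R)/(1-w)) < Re w`. -/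
lemma core_ineq {w : ℂ} {R : ℝ} (h1 : Complex.normSq w < R) (h2 : R < 1) :
    ((w - (R : ℂ)) / (1 - w)).re < w.re := by
  have hns : Complex.normSq w < 1 := h1.trans h2
  have hw1 : (1 : ℂ) - w ≠ 0 := by
    intro h
    have : w = 1 := by linear_combination -h
    rw [this] at hns; simp at hns
  have hpos : 0 < Complex.normSq (1 - w) := Complex.normSq_pos.2 hw1
  rw [Complex.div_re]
  set x := w.re with hx
  set y := w.im with hy
  have hre : x * x + y * y < R := by
    have := h1; rwa [Complex.normSq_apply] at this
  have hDval : Complex.normSq (1 - w) = (1 - x) * (1 - x) + y * y := by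
    rw [Complex.normSq_apply]; simp; rfl
  have hx1 : x < 1 := by nlinarith
  rw [hDval]
  rw [← add_div, div_lt_iff₀ (by rw [hDval] at hpos; exact hpos)]
  have hsub : (w - (R:ℂ)).re = x - R := by simp; rfl
  have hsub2 : (w - (R:ℂ)).im = y := by simp; rfl
  have h1re : (1 - w).re = 1 - x := by simp; rfl
  have h1im : (1 - w).im = -y := by simp; rfl
  rw [hsub, hsub2, h1re, h1im]
  nlinarith [sq_nonneg y, mul_pos (sub_pos.2 hre) (sub_pos.2 hx1)]

lemma sum_zero_unique {m : ℕ} (hm : 1 ≤ m) (l : Fin m → ℂ) (hl : ∀ i, normSq (l i) < 1)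
    (hsum : ∑ i, l i = 0) {z : ℂ} (hz : normSq z < 1)
    (hPhi : ∑ i, (l i + conj' z) / (1 + l i * z) = 0) : z = 0 := by
  by_contra hz0
  have hR : 0 < normSq z := Complex.normSq_pos.2 hz0
  have hne : (Finset.univ : Finset (Fin m)).Nonempty := ⟨⟨0, hm⟩, mem_univ _⟩
  have key : ∑ i, ((-(l i * z) - ((normSq z : ℝ) : ℂ)) / (1 - -(l i * z))).re <
      ∑ i, (-(l i * z)).re := by
    apply Finset.sum_lt_sum_of_nonempty hne
    intro i _
    apply core_ineq
    · rw [Complex.normSq_neg, Complex.normSq_mul]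
      nlinarith [Complex.normSq_nonneg (l i), hl i]
    · exact hz
  have e1 : ∀ i : Fin m, (-(l i * z) - ((normSq z : ℝ) : ℂ)) / (1 - -(l i * z)) =
      (-z) * ((l i + conj' z) / (1 + l i * z)) := by
    intro i
    have hd : 1 + l i * z ≠ 0 := denom_ne (hl i) hz
    have hcz : z * conj' z = ((normSq z : ℝ) : ℂ) := Complex.mul_conj z
    rw [sub_neg_eq_add, mul_div_assoc' (-z)]
    congr 1
    linear_combination hcz
  have eL : ∑ i, ((-(l i * z) - ((normSq z : ℝ) : ℂ)) / (1 - -(l i * z))).re = 0 := by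
    have : ∑ i, ((-(l i * z) - ((normSq z : ℝ) : ℂ)) / (1 - -(l i * z))) = 0 := by
      rw [Finset.sum_congr rfl fun i _ => e1 i, ← Finset.mul_sum, hPhi, mul_zero]
    rw [← Complex.re_sum] at *
    rw [this]; simp
  have eR : ∑ i, (-(l i * z)).re = 0 := by
    have : ∑ i, (-(l i * z)) = 0 := by
      have : ∑ i, (-(l i * z)) = (-z) * ∑ i, l i := by
        rw [Finset.mul_sum]; apply Finset.sum_congr rfl; intro i _; ring
      rw [this, hsum, mul_zero]
    rw [← Complex.re_sum, this]; simp
  rw [eL, eR] at key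
  exact lt_irrefl _ key

section Mobius

variable {l z₁ z₂ : ℂ}

lemma d_ne (hz₁ : normSq z₁ < 1) (hz₂ : normSq z₂ < 1) : (1 : ℂ) - conj' z₁ * z₂ ≠ 0 := by
  have h := denom_ne (l := -conj' z₁) (z := z₂)
    (by rwa [Complex.normSq_neg, Complex.normSq_conj]) hz₂
  intro h2; apply h; linear_combination h2

lemma d_ne' (hz₁ : normSq z₁ < 1) (hz₂ : normSq z₂ < 1) : (1 : ℂ) - z₁ * conj' z₂ ≠ 0 := by
  have h := denom_ne (l := -z₁) (z := conj' z₂) (by rwa [Complex.normSq_neg])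
    (by rwa [Complex.normSq_conj])
  intro h2; apply h; linear_combination h2

lemma normSq_zprime_lt_one (hz₁ : normSq z₁ < 1) (hz₂ : normSq z₂ < 1) :
    normSq ((z₂ - z₁) / (1 - conj' z₁ * z₂)) < 1 := by
  rw [Complex.normSq_div]
  have h0 : 0 < normSq (1 - conj' z₁ * z₂) := Complex.normSq_pos.2 (d_ne hz₁ hz₂)
  rw [div_lt_one h0]
  have key : normSq (1 - conj' z₁ * z₂) - normSq (z₂ - z₁) =
      (1 - normSq z₁) * (1 - normSq z₂) := by
    simp only [Complex.normSq_apply, Complex.sub_re, Complex.sub_im, Complex.mul_re,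
      Complex.mul_im, Complex.one_re, Complex.one_im, Complex.conj_re, Complex.conj_im]
    ring
  nlinarith

lemma term_transform (hl : normSq l < 1) (hz₁ : normSq z₁ < 1) (hz₂ : normSq z₂ < 1) :
    ((l + conj' z₁) / (1 + l * z₁) + conj' ((z₂ - z₁) / (1 - conj' z₁ * z₂))) /
        (1 + (l + conj' z₁) / (1 + l * z₁) * ((z₂ - z₁) / (1 - conj' z₁ * z₂))) =
      ((1 - conj' z₁ * z₂) / (1 - z₁ * conj' z₂)) * ((l + conj' z₂) / (1 + l * z₂)) := by
  have hd1 : 1 + l * z₁ ≠ 0 := denom_ne hl hz₁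
  have hd2 : 1 + l * z₂ ≠ 0 := denom_ne hl hz₂
  have hD : (1 : ℂ) - conj' z₁ * z₂ ≠ 0 := d_ne hz₁ hz₂
  have hD' : (1 : ℂ) - z₁ * conj' z₂ ≠ 0 := d_ne' hz₁ hz₂
  have hcz : z₁ * conj' z₁ = ((normSq z₁ : ℝ) : ℂ) := Complex.mul_conj z₁
  have h1N : (1 : ℂ) - ((normSq z₁ : ℝ) : ℂ) ≠ 0 := by
    intro h
    have h2 : ((normSq z₁ : ℝ) : ℂ) = ((1 : ℝ) : ℂ) := by push_cast; linear_combination -h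
    have := Complex.ofReal_injective h2
    linarith
  have hconj : conj' ((z₂ - z₁) / (1 - conj' z₁ * z₂)) =
      (conj' z₂ - conj' z₁) / (1 - z₁ * conj' z₂) := by
    rw [map_div₀]
    congr 1 <;> simp
  have hnum : (l + conj' z₁) / (1 + l * z₁) + conj' ((z₂ - z₁) / (1 - conj' z₁ * z₂)) =
      ((l + conj' z₂) * (1 - ((normSq z₁ : ℝ) : ℂ))) /
        ((1 + l * z₁) * (1 - z₁ * conj' z₂)) := by
    rw [hconj, div_add_div _ _ hd1 hD']
    congr 1
    linear_combination (-(l + conj' z₂)) * hcz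
  have hden : 1 + (l + conj' z₁) / (1 + l * z₁) * ((z₂ - z₁) / (1 - conj' z₁ * z₂)) =
      ((1 + l * z₂) * (1 - ((normSq z₁ : ℝ) : ℂ))) /
        ((1 + l * z₁) * (1 - conj' z₁ * z₂)) := by
    rw [div_mul_div_comm, add_div' _ _ _ (mul_ne_zero hd1 hD)]
    congr 1
    linear_combination (-(1 + l * z₂)) * hcz
  rw [hnum, hden]
  field_simp

lemma uniqueness {m : ℕ} (hm : 1 ≤ m) (l : Fin m → ℂ) (hl : ∀ i, normSq (l i) < 1)
    {z₁ z₂ : ℂ} (hz₁ : normSq z₁ < 1) (hz₂ : normSq z₂ < 1)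
    (hp1 : ∑ i, (l i + conj' z₁) / (1 + l i * z₁) = 0)
    (hp2 : ∑ i, (l i + conj' z₂) / (1 + l i * z₂) = 0) : z₁ = z₂ := by
  set l' : Fin m → ℂ := fun i => (l i + conj' z₁) / (1 + l i * z₁) with hl'def
  have hl' : ∀ i, normSq (l' i) < 1 := fun i => normSq_mobius_lt_one (hl i) hz₁
  set z' : ℂ := (z₂ - z₁) / (1 - conj' z₁ * z₂) with hz'def
  have hz' : normSq z' < 1 := normSq_zprime_lt_one hz₁ hz₂
  have hsum : ∑ i, l' i = 0 := hp1
  have hphi' : ∑ i, (l' i + conj' z') / (1 + l' i * z') = 0 := by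
    have : ∀ i : Fin m, (l' i + conj' z') / (1 + l' i * z') =
        ((1 - conj' z₁ * z₂) / (1 - z₁ * conj' z₂)) * ((l i + conj' z₂) / (1 + l i * z₂)) :=
      fun i => term_transform (hl i) hz₁ hz₂
    rw [Finset.sum_congr rfl fun i _ => this i, ← Finset.mul_sum, hp2, mul_zero]
  have hz0 : z' = 0 := sum_zero_unique hm l' hl' hsum hz' hphi'
  have : z₂ - z₁ = 0 := by
    rcases div_eq_zero_iff.1 hz0 with h | h
    · exact h
    · exact absurd h (d_ne hz₁ hz₂)
  exact (sub_eq_zero.1 this).symm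

end Mobius

end HingeAux

namespace HingeAux

section Existence

lemma quad_eq (c d : ℂ) (t : ℝ) :
    normSq (c + (t : ℂ) * d) = (c.re + t * d.re) ^ 2 + (c.im + t * d.im) ^ 2 := by
  simp only [Complex.normSq_apply, Complex.add_re, Complex.add_im, Complex.mul_re,
    Complex.mul_im, Complex.ofReal_re, Complex.ofReal_im]
  ring

lemma quad_deriv (c d : ℂ) :
    HasDerivAt (fun t : ℝ => normSq (c + (t : ℂ) * d))
      (2 * (c.re * d.re + c.im * d.im)) 0 := by
  have hA : HasDerivAt (fun t : ℝ => c.re + t * d.re) d.re 0 := by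
    simpa using ((hasDerivAt_id (0 : ℝ)).mul_const d.re).const_add c.re
  have hB : HasDerivAt (fun t : ℝ => c.im + t * d.im) d.im 0 := by
    simpa using ((hasDerivAt_id (0 : ℝ)).mul_const d.im).const_add c.im
  have h := (hA.pow 2).add (hB.pow 2)
  have heq : (fun t : ℝ => (c.re + t * d.re) ^ 2 + (c.im + t * d.im) ^ 2) =
      fun t : ℝ => normSq (c + (t : ℂ) * d) := by
    funext t; rw [quad_eq]
  replace h : HasDerivAt (fun t : ℝ => (c.re + t * d.re) ^ 2 + (c.im + t * d.im) ^ 2) _ 0 := h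
  rw [heq] at h
  convert h using 1
  push_cast
  ring

lemma existence {m : ℕ} (hm : 1 ≤ m) (l : Fin m → ℂ) (hl : ∀ i, normSq (l i) < 1) :
    ∃ z : ℂ, normSq z < 1 ∧ ∑ i, (l i + conj' z) / (1 + l i * z) = 0 := by
  have hm' : (1 : ℝ) ≤ (m : ℝ) := by exact_mod_cast hm
  have habs : ∀ i, ‖l i‖ < 1 := fun i => abs_lt_one_of_normSq (hl i)
  set L : ℝ := ∑ i, Real.log ((1 - ‖l i‖) ^ 2) with hLdef
  have hLle : L ≤ 0 := by
    apply Finset.sum_nonpos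
    intro i _
    apply Real.log_nonpos (by positivity)
    nlinarith [norm_nonneg (l i), habs i]
  set δ : ℝ := Real.exp ((L - 1) / (m : ℝ)) with hδdef
  have hδ0 : 0 < δ := Real.exp_pos _
  have hδ1 : δ < 1 := by
    rw [hδdef, Real.exp_lt_one_iff]
    apply div_neg_of_neg_of_pos <;> linarith
  set r : ℝ := Real.sqrt (1 - δ) with hrdef
  have hr0 : 0 ≤ r := Real.sqrt_nonneg _
  have hr1 : r < 1 := by
    have h := Real.sqrt_lt_sqrt (by linarith : (0:ℝ) ≤ 1 - δ) (by linarith : 1 - δ < 1)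
    simpa [hrdef] using h
  have hrsq : r ^ 2 = 1 - δ := Real.sq_sqrt (by linarith)
  set H : ℂ → ℝ :=
    fun z => (∑ i, Real.log (normSq (1 + l i * z))) - (m : ℝ) * Real.log (1 - normSq z)
    with hHdef
  have hKz : ∀ z : ℂ, z ∈ Metric.closedBall (0 : ℂ) r → normSq z ≤ r ^ 2 := by
    intro z hz
    rw [Metric.mem_closedBall, dist_zero_right] at hz
    have habz : ‖z‖ ≤ r := hz
    nlinarith [Complex.sq_norm z, norm_nonneg z]
  have hKlt : ∀ z : ℂ, z ∈ Metric.closedBall (0 : ℂ) r → normSq z < 1 := by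
    intro z hz; have := hKz z hz; nlinarith
  have hcont : ContinuousOn H (Metric.closedBall (0 : ℂ) r) := by
    apply ContinuousOn.sub
    · apply continuousOn_finset_sum
      intro i _
      apply ContinuousOn.log
      · exact (Complex.continuous_normSq.comp
          (continuous_const.add (continuous_const.mul continuous_id))).continuousOn
      · intro z hz
        exact ne_of_gt (Complex.normSq_pos.2 (denom_ne (hl i) (hKlt z hz)))
    · refine ContinuousOn.mul continuousOn_const (ContinuousOn.log ?_ ?_)
      · exact (continuous_const.sub Complex.continuous_normSq).continuousOn
      · intro z hz; have := hKlt z hz; intro h; linarith [h]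
  have h0K : (0 : ℂ) ∈ Metric.closedBall (0 : ℂ) r := by
    simp [Metric.mem_closedBall, hr0]
  obtain ⟨z₀, hz₀K, hminOn⟩ :=
    (isCompact_closedBall (0 : ℂ) r).exists_isMinOn ⟨0, h0K⟩ hcont
  have hH0 : H 0 = 0 := by simp [hHdef]
  have habsz₀ : ‖z₀‖ ≤ r := by
    have := hz₀K
    rw [Metric.mem_closedBall, dist_zero_right] at this
    exact this
  have hz₀lt : ‖z₀‖ < r := by
    by_contra hc
    push_neg at hc
    have heq : ‖z₀‖ = r := le_antisymm habsz₀ hc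
    have hNz : normSq z₀ = 1 - δ := by rw [← Complex.sq_norm, heq, hrsq]
    have hδle : ∀ i : Fin m, Real.log ((1 - ‖l i‖) ^ 2) ≤
        Real.log (normSq (1 + l i * z₀)) := by
      intro i
      have habz1 : ‖z₀‖ ≤ 1 := le_trans habsz₀ (le_of_lt hr1)
      have h1 : ‖l i * z₀‖ ≤ ‖l i‖ := by
        rw [norm_mul]
        nlinarith [norm_nonneg (l i), norm_nonneg z₀]
      have h2 : 1 - ‖l i‖ ≤ ‖1 + l i * z₀‖ := by
        have h3 : ‖(1 : ℂ)‖ = ‖(1 + l i * z₀) - l i * z₀‖ := by ring_nf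
        have h4 := norm_sub_le (1 + l i * z₀) (l i * z₀)
        rw [← h3] at h4
        simp only [norm_one] at h4 ⊢
        linarith
      have hp : (0:ℝ) < (1 - ‖l i‖) ^ 2 := by nlinarith [habs i]
      apply Real.log_le_log hp
      rw [← Complex.sq_norm]
      have h5 : 0 ≤ 1 - ‖l i‖ := by linarith [habs i]
      nlinarith
    have hHge : (1 : ℝ) ≤ H z₀ := by
      have hs : L ≤ ∑ i, Real.log (normSq (1 + l i * z₀)) :=
        Finset.sum_le_sum fun i _ => hδle i
      have hlogδ : Real.log (1 - normSq z₀) = (L - 1) / (m : ℝ) := by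
        rw [hNz, sub_sub_cancel, Real.log_exp]
      have hm0 : (m : ℝ) ≠ 0 := by linarith
      have : (m : ℝ) * Real.log (1 - normSq z₀) = L - 1 := by
        rw [hlogδ]; field_simp
      rw [hHdef]
      simp only
      rw [this]
      linarith
    have hle : H z₀ ≤ H 0 := (isMinOn_iff.1 hminOn) 0 h0K
    linarith [hle, hH0, hHge]
  have hNz₀ : normSq z₀ < 1 := hKlt z₀ hz₀K
  have hlocal : IsLocalMin H z₀ := by
    apply hminOn.isLocalMin
    apply Filter.mem_of_superset _ Metric.ball_subset_closedBall
    apply Metric.isOpen_ball.mem_nhds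
    rw [Metric.mem_ball, dist_zero_right]
    exact hz₀lt
  -- directional derivatives vanish
  have hdir : ∀ v : ℂ,
      (∑ i, 2 * ((1 + l i * z₀).re * (l i * v).re + (1 + l i * z₀).im * (l i * v).im) /
        normSq (1 + l i * z₀)) +
      (m : ℝ) * (2 * (z₀.re * v.re + z₀.im * v.im) / (1 - normSq z₀)) = 0 := by
    intro v
    have hg : IsLocalMin (fun t : ℝ => H (z₀ + t • v)) 0 := by
      have hcont2 : Continuous (fun t : ℝ => z₀ + t • v) :=
        continuous_const.add (continuous_id.smul continuous_const)
      have ht : Filter.Tendsto (fun t : ℝ => z₀ + t • v) (nhds 0) (nhds z₀) := by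
        have := hcont2.tendsto 0
        simpa using this
      have hev := ht.eventually hlocal
      simpa [IsLocalMin, IsMinFilter] using hev
    have hQi : ∀ i : Fin m, HasDerivAt (fun t : ℝ => normSq (1 + l i * (z₀ + t • v)))
        (2 * ((1 + l i * z₀).re * (l i * v).re + (1 + l i * z₀).im * (l i * v).im)) 0 := by
      intro i
      have hfe : (fun t : ℝ => normSq (1 + l i * (z₀ + t • v))) =
          fun t : ℝ => normSq ((1 + l i * z₀) + (t : ℂ) * (l i * v)) := by
        funext t; congr 1; rw [Complex.real_smul]; ring
      rw [hfe]; exact quad_deriv _ _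
    have hlogi : ∀ i : Fin m,
        HasDerivAt (fun t : ℝ => Real.log (normSq (1 + l i * (z₀ + t • v))))
          (2 * ((1 + l i * z₀).re * (l i * v).re + (1 + l i * z₀).im * (l i * v).im) /
            normSq (1 + l i * z₀)) 0 := by
      intro i
      have hne : normSq (1 + l i * (z₀ + (0 : ℝ) • v)) ≠ 0 := by
        simp only [zero_smul, add_zero]
        exact ne_of_gt (Complex.normSq_pos.2 (denom_ne (hl i) hNz₀))
      have h := (hQi i).log hne
      convert h using 2
      simp
    have hsum : HasDerivAt
        (fun t : ℝ => ∑ i, Real.log (normSq (1 + l i * (z₀ + t • v))))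
        (∑ i, 2 * ((1 + l i * z₀).re * (l i * v).re + (1 + l i * z₀).im * (l i * v).im) /
          normSq (1 + l i * z₀)) 0 :=
      HasDerivAt.fun_sum fun i _ => hlogi i
    have hQ0 : HasDerivAt (fun t : ℝ => 1 - normSq (z₀ + t • v))
        (-(2 * (z₀.re * v.re + z₀.im * v.im))) 0 := by
      have hfe : (fun t : ℝ => 1 - normSq (z₀ + t • v)) =
          fun t : ℝ => 1 - normSq (z₀ + (t : ℂ) * v) := by
        funext t; rw [Complex.real_smul]
      rw [hfe]
      exact (quad_deriv z₀ v).const_sub 1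
    have hne0 : (fun t : ℝ => 1 - normSq (z₀ + t • v)) 0 ≠ 0 := by
      simp only [zero_smul, add_zero]
      intro h; linarith [hNz₀, h]
    have hlog0 : HasDerivAt (fun t : ℝ => Real.log (1 - normSq (z₀ + t • v)))
        (-(2 * (z₀.re * v.re + z₀.im * v.im)) / (1 - normSq z₀)) 0 := by
      have h := hQ0.log hne0
      convert h using 2
      simp
    have hT : HasDerivAt (fun t : ℝ => H (z₀ + t • v))
        ((∑ i, 2 * ((1 + l i * z₀).re * (l i * v).re + (1 + l i * z₀).im * (l i * v).im) /
          normSq (1 + l i * z₀)) -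
          (m : ℝ) * (-(2 * (z₀.re * v.re + z₀.im * v.im)) / (1 - normSq z₀))) 0 :=
      hsum.sub (hlog0.const_mul (m : ℝ))
    have hD0 := hg.deriv_eq_zero
    rw [hT.deriv] at hD0
    linear_combination hD0
  -- convert to the complex equation
  set N : ℝ := normSq z₀ with hNdef
  have h1N : (0:ℝ) < 1 - N := by simp only [hNdef]; linarith
  have h1Nc : (1 : ℂ) - ((N : ℝ) : ℂ) ≠ 0 := by
    intro h
    have h2 : ((N : ℝ) : ℂ) = ((1 : ℝ) : ℂ) := by push_cast; linear_combination -h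
    have := Complex.ofReal_injective h2
    linarith
  set W : ℂ := (∑ i, l i / (1 + l i * z₀)) + (m : ℂ) * conj' z₀ / (1 - ((N : ℝ) : ℂ))
    with hWdef
  have hWsecond_re : ((m : ℂ) * conj' z₀ / (1 - ((N : ℝ) : ℂ))).re = (m : ℝ) * z₀.re / (1 - N) := by
    rw [Complex.div_re]
    simp only [Complex.mul_re, Complex.mul_im, Complex.natCast_re, Complex.natCast_im,
      Complex.conj_re, Complex.conj_im, Complex.sub_re, Complex.sub_im, Complex.one_re,
      Complex.one_im, Complex.ofReal_re, Complex.ofReal_im, Complex.normSq_apply]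
    field_simp
    ring
  have hWsecond_im : ((m : ℂ) * conj' z₀ / (1 - ((N : ℝ) : ℂ))).im =
      -((m : ℝ) * z₀.im) / (1 - N) := by
    rw [Complex.div_im]
    simp only [Complex.mul_re, Complex.mul_im, Complex.natCast_re, Complex.natCast_im,
      Complex.conj_re, Complex.conj_im, Complex.sub_re, Complex.sub_im, Complex.one_re,
      Complex.one_im, Complex.ofReal_re, Complex.ofReal_im, Complex.normSq_apply]
    field_simp
    ring
  have hW : W = 0 := by
    have h1 := hdir 1
    have hI := hdir Complex.I
    simp only [Complex.mul_re, Complex.mul_im, Complex.one_re, Complex.one_im, Complex.I_re,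
      Complex.I_im, mul_zero, mul_one, zero_mul, sub_zero, add_zero, zero_add, zero_sub] at h1 hI
    apply Complex.ext
    · rw [hWdef]
      simp only [Complex.add_re, Complex.re_sum, Complex.zero_re]
      rw [hWsecond_re]
      have he : ∀ i : Fin m, (l i / (1 + l i * z₀)).re =
          ((l i).re * (1 + l i * z₀).re + (l i).im * (1 + l i * z₀).im) /
            normSq (1 + l i * z₀) := by
        intro i; rw [Complex.div_re]; ring
      rw [Finset.sum_congr rfl fun i _ => he i]
      have : ∑ i, ((l i).re * (1 + l i * z₀).re + (l i).im * (1 + l i * z₀).im) /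
            normSq (1 + l i * z₀) =
          (1/2) * ∑ i, 2 * ((1 + l i * z₀).re * (l i).re + (1 + l i * z₀).im * (l i).im) /
            normSq (1 + l i * z₀) := by
        rw [Finset.mul_sum]
        apply Finset.sum_congr rfl
        intro i _; ring
      rw [this]
      linear_combination (1/2) * h1
    · rw [hWdef]
      simp only [Complex.add_im, Complex.im_sum, Complex.zero_im]
      rw [hWsecond_im]
      have he : ∀ i : Fin m, (l i / (1 + l i * z₀)).im =
          ((l i).im * (1 + l i * z₀).re - (l i).re * (1 + l i * z₀).im) /
            normSq (1 + l i * z₀) := by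
        intro i; rw [Complex.div_im]; ring
      rw [Finset.sum_congr rfl fun i _ => he i]
      have : ∑ i, ((l i).im * (1 + l i * z₀).re - (l i).re * (1 + l i * z₀).im) /
            normSq (1 + l i * z₀) =
          -((1/2) * ∑ i, 2 * ((1 + l i * z₀).re * -(l i).im + (1 + l i * z₀).im * (l i).re) /
            normSq (1 + l i * z₀)) := by
        rw [Finset.mul_sum, ← Finset.sum_neg_distrib]
        apply Finset.sum_congr rfl
        intro i _; ring
      rw [this]
      linear_combination (-(1/2)) * hI
  refine ⟨z₀, hNz₀, ?_⟩
  have hcz : z₀ * conj' z₀ = ((N : ℝ) : ℂ) := Complex.mul_conj z₀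
  have e3 : ∀ i : Fin m, (l i + conj' z₀) / (1 + l i * z₀) =
      (1 - ((N : ℝ) : ℂ)) * (l i / (1 + l i * z₀)) + conj' z₀ := by
    intro i
    have hd := denom_ne (hl i) hNz₀
    field_simp
    linear_combination (-(l i)) * hcz
  rw [Finset.sum_congr rfl fun i _ => e3 i, Finset.sum_add_distrib, ← Finset.mul_sum,
    Finset.sum_const, Finset.card_univ, Fintype.card_fin, nsmul_eq_mul]
  have : (m : ℂ) * conj' z₀ = (1 - ((N : ℝ) : ℂ)) * ((m : ℂ) * conj' z₀ / (1 - ((N : ℝ) : ℂ))) := by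
    field_simp
  rw [this, ← mul_add, ← hWdef, hW, mul_zero]

end Existence

end HingeAux

namespace HingeAux

section MatrixPart

open Polynomial Matrix

variable {m : ℕ}

lemma eval_charpoly' (M : Matrix (Fin m) (Fin m) ℂ) (x : ℂ) :
    M.charpoly.eval x = (x • (1 : Matrix (Fin m) (Fin m) ℂ) - M).det := by
  rw [Matrix.charpoly, ← Polynomial.coe_evalRingHom, RingHom.map_det]
  congr 1
  ext i j
  by_cases h : i = j
  · subst h
    simp [Matrix.charmatrix_apply_eq, Matrix.one_apply_eq]
  · simp [Matrix.charmatrix_apply_ne _ _ _ h, Matrix.one_apply_ne h]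

lemma prod_fin_eq_multiset_prod (f : Fin m → ℂ[X]) :
    ∏ i, f i = (Multiset.map f Finset.univ.val).prod :=
  Finset.prod_eq_multiset_prod _ _

lemma roots_prod_X_sub_C' (f : Fin m → ℂ) :
    (∏ i, (X - C (f i))).roots = Multiset.map f Finset.univ.val := by
  have h2 := Polynomial.roots_multiset_prod_X_sub_C (Multiset.map f Finset.univ.val)
  rw [Multiset.map_map] at h2
  rw [prod_fin_eq_multiset_prod]
  exact h2

lemma sum_roots_prod_X_sub_C (f : Fin m → ℂ) :
    (∏ i, (X - C (f i))).roots.sum = ∑ i, f i := by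
  rw [roots_prod_X_sub_C', ← Finset.sum_eq_multiset_sum]

/-- eigenvalues with multiplicity -/
lemma spec_exists (s : Matrix (Fin m) (Fin m) ℂ) :
    ∃ lam : Fin m → ℂ,
      ∀ x : ℂ, (x • (1 : Matrix (Fin m) (Fin m) ℂ) - s).det = ∏ i, (x - lam i) := by
  have hmonic := s.charpoly_monic
  have hsplits := IsAlgClosed.splits (k := ℂ) s.charpoly
  have hfac := hsplits.eq_prod_roots_of_monic hmonic
  have hcard : Multiset.card s.charpoly.roots = m := by
    rw [Polynomial.splits_iff_card_roots.mp hsplits, Matrix.charpoly_natDegree_eq_dim,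
      Fintype.card_fin]
  set Ll := s.charpoly.roots.toList with hLl
  have hlen : Ll.length = m := by rw [hLl, Multiset.length_toList, hcard]
  set lam : Fin m → ℂ := fun i => Ll.get (Fin.cast hlen.symm i) with hlam
  have key : s.charpoly = ∏ i, (X - C (lam i)) := by
    conv_lhs => rw [hfac]
    rw [← Multiset.coe_toList s.charpoly.roots, ← hLl, Multiset.map_coe, Multiset.prod_coe]
    have h1 : List.map (fun a => X - C a) Ll =
        List.ofFn ((fun a => X - C a) ∘ Ll.get) := by
      conv_lhs => rw [← List.ofFn_get Ll, List.map_ofFn]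
    rw [h1, List.prod_ofFn]
    exact Fintype.prod_equiv (finCongr hlen) _ _ (fun i => rfl)
  refine ⟨lam, fun x => ?_⟩
  rw [← eval_charpoly', key, Polynomial.eval_prod]
  simp

section WithLam

variable (s : Matrix (Fin m) (Fin m) ℂ) (lam : Fin m → ℂ)
variable (heval : ∀ x : ℂ, (x • (1 : Matrix (Fin m) (Fin m) ℂ) - s).det = ∏ i, (x - lam i))

include heval

lemma charpoly_eq_prod : s.charpoly = ∏ i, (X - C (lam i)) :=
  Polynomial.funext fun x => by
    rw [eval_charpoly', heval x, Polynomial.eval_prod]; simp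

lemma trace_eq_sum_lam : s.trace = ∑ i, lam i := by
  rw [Matrix.trace_eq_sum_roots_charpoly, charpoly_eq_prod s lam heval,
    sum_roots_prod_X_sub_C]

lemma norm_lam_lt (hs : ∀ x : ℂ, (s - x • (1 : Matrix (Fin m) (Fin m) ℂ)).det = 0 →
    ‖x‖ < 1) (i : Fin m) : normSq (lam i) < 1 := by
  apply normSq_lt_one_of_abs
  apply hs
  have h1 : s - lam i • (1 : Matrix (Fin m) (Fin m) ℂ) =
      -(lam i • (1 : Matrix (Fin m) (Fin m) ℂ) - s) := by rw [neg_sub]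
  rw [h1, Matrix.det_neg, heval (lam i)]
  have h2 : ∏ j, (lam i - lam j) = 0 :=
    Finset.prod_eq_zero (Finset.mem_univ i) (sub_self _)
  rw [h2, mul_zero]

lemma det_affine (P Q : ℂ) :
    (P • s + Q • (1 : Matrix (Fin m) (Fin m) ℂ)).det = ∏ i, (P * lam i + Q) := by
  by_cases hP : P = 0
  · subst hP
    rw [zero_smul, zero_add, Matrix.det_smul, Matrix.det_one, mul_one]
    simp [Finset.prod_const, Finset.card_univ]
  · have h2 : (-P) * (-Q / P) = Q := by field_simp
    have h3 : P • s + Q • (1 : Matrix (Fin m) (Fin m) ℂ) =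
        (-P) • ((-Q / P) • (1 : Matrix (Fin m) (Fin m) ℂ) - s) := by
      rw [smul_sub, smul_smul, h2, neg_smul, sub_neg_eq_add, add_comm]
    rw [h3, Matrix.det_smul, heval (-Q / P), Fintype.card_fin]
    rw [show (-P) ^ m = ∏ _i : Fin m, (-P) by
      rw [Finset.prod_const, Finset.card_univ, Fintype.card_fin]]
    rw [← Finset.prod_mul_distrib]
    apply Finset.prod_congr rfl
    intro i _
    field_simp
    ring

lemma isUnit_affine {P Q : ℂ} (h : ∀ i, P * lam i + Q ≠ 0) :
    IsUnit (P • s + Q • (1 : Matrix (Fin m) (Fin m) ℂ)) := by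
  rw [Matrix.isUnit_iff_isUnit_det, det_affine s lam heval, isUnit_iff_ne_zero]
  exact Finset.prod_ne_zero_iff.2 fun i _ => h i

lemma trace_inv_affine {P Q : ℂ} (h : ∀ i, P * lam i + Q ≠ 0) :
    (P • s + Q • (1 : Matrix (Fin m) (Fin m) ℂ))⁻¹.trace = ∑ i, (P * lam i + Q)⁻¹ := by
  set M := P • s + Q • (1 : Matrix (Fin m) (Fin m) ℂ) with hM
  have hdet : M.det = ∏ i, (P * lam i + Q) := det_affine s lam heval P Q
  have hu : IsUnit M.det := by
    rw [hdet, isUnit_iff_ne_zero]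
    exact Finset.prod_ne_zero_iff.2 fun i _ => h i
  have hinv_eval : ∀ x : ℂ, (x • (1 : Matrix (Fin m) (Fin m) ℂ) - M⁻¹).det =
      ∏ i, (x - (P * lam i + Q)⁻¹) := by
    intro x
    have h1 : x • (1 : Matrix (Fin m) (Fin m) ℂ) - M⁻¹ =
        M⁻¹ * (x • M - 1) := by
      rw [Matrix.mul_sub, Matrix.mul_smul, Matrix.nonsing_inv_mul _ hu, Matrix.mul_one]
    have h2 : x • M - (1 : Matrix (Fin m) (Fin m) ℂ) =
        (x * P) • s + (x * Q - 1) • (1 : Matrix (Fin m) (Fin m) ℂ) := by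
      rw [hM, smul_add, smul_smul, smul_smul, sub_smul, one_smul]
      abel
    rw [h1, Matrix.det_mul, Matrix.det_nonsing_inv, Ring.inverse_eq_inv, h2,
      det_affine s lam heval (x * P) (x * Q - 1), hM, det_affine s lam heval P Q,
      ← Finset.prod_inv_distrib, ← Finset.prod_mul_distrib]
    apply Finset.prod_congr rfl
    intro i _
    field_simp [h i]
    ring
  have hcp : M⁻¹.charpoly = ∏ i, (X - C ((P * lam i + Q)⁻¹)) :=
    Polynomial.funext fun x => by
      rw [eval_charpoly', hinv_eval x, Polynomial.eval_prod]; simp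
  rw [Matrix.trace_eq_sum_roots_charpoly, hcp, sum_roots_prod_X_sub_C]

lemma trace_formula (hm : 1 ≤ m) (u v P Q : ℂ) (h : ∀ i, P * lam i + Q ≠ 0) :
    ((u • s + v • (1 : Matrix (Fin m) (Fin m) ℂ)) *
      (P • s + Q • (1 : Matrix (Fin m) (Fin m) ℂ))⁻¹).trace =
    ∑ i, (u * lam i + v) / (P * lam i + Q) := by
  by_cases hP : P = 0
  · subst hP
    have hQ : Q ≠ 0 := by simpa using h ⟨0, hm⟩
    have hinv : (((0:ℂ) • s + Q • (1 : Matrix (Fin m) (Fin m) ℂ)))⁻¹ =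
        Q⁻¹ • (1 : Matrix (Fin m) (Fin m) ℂ) := by
      apply Matrix.inv_eq_right_inv
      rw [zero_smul, zero_add, Matrix.smul_mul, Matrix.one_mul, smul_smul,
        mul_inv_cancel₀ hQ, one_smul]
    rw [hinv, Matrix.mul_smul, Matrix.mul_one, Matrix.trace_smul, Matrix.trace_add,
      Matrix.trace_smul, Matrix.trace_smul, Matrix.trace_one,
      trace_eq_sum_lam s lam heval]
    have : ∀ i : Fin m, (u * lam i + v) / ((0:ℂ) * lam i + Q) = (u * lam i + v) / Q := by
      intro i; rw [zero_mul, zero_add]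
    rw [Finset.sum_congr rfl fun i _ => this i, ← Finset.sum_div, Finset.sum_add_distrib,
      ← Finset.mul_sum, Finset.sum_const, Finset.card_univ, Fintype.card_fin, nsmul_eq_mul]
    simp only [smul_eq_mul, Fintype.card_fin]
    field_simp
  · set M := P • s + Q • (1 : Matrix (Fin m) (Fin m) ℂ) with hM
    have hu : IsUnit M.det := by
      rw [det_affine s lam heval, isUnit_iff_ne_zero]
      exact Finset.prod_ne_zero_iff.2 fun i _ => h i
    have e1 : u / P * P = u := by field_simp
    have e2 : u / P * Q + (v - u * Q / P) = v := by field_simp; ring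
    have hdecomp : u • s + v • (1 : Matrix (Fin m) (Fin m) ℂ) =
        (u / P) • M + (v - u * Q / P) • (1 : Matrix (Fin m) (Fin m) ℂ) := by
      rw [hM, smul_add, smul_smul, smul_smul, add_assoc, ← add_smul, e1, e2]
    rw [hdecomp, Matrix.add_mul, Matrix.smul_mul, Matrix.smul_mul, Matrix.trace_add,
      Matrix.trace_smul, Matrix.trace_smul, Matrix.mul_nonsing_inv _ hu,
      Matrix.one_mul, Matrix.trace_one, trace_inv_affine s lam heval h]
    have : ∀ i : Fin m, (u * lam i + v) / (P * lam i + Q) =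
        u / P + (v - u * Q / P) * (P * lam i + Q)⁻¹ := by
      intro i
      rw [div_eq_iff (h i), add_mul, mul_assoc, inv_mul_cancel₀ (h i), mul_one]
      field_simp
      ring
    rw [Finset.sum_congr rfl fun i _ => this i, Finset.sum_add_distrib, ← Finset.mul_sum,
      Finset.sum_const, Finset.card_univ, Fintype.card_fin, nsmul_eq_mul]
    simp only [smul_eq_mul, Fintype.card_fin]
    ring

end WithLam

end MatrixPart

end HingeAux

namespace HingeAux

lemma exists_unique_phi {m : ℕ} (hm : 1 ≤ m) (l : Fin m → ℂ) (hl : ∀ i, normSq (l i) < 1) :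
    ∃! z : ℂ, normSq z < 1 ∧ ∑ i, (l i + conj' z) / (1 + l i * z) = 0 := by
  obtain ⟨z, hz, hphi⟩ := existence hm l hl
  exact ⟨z, ⟨hz, hphi⟩, fun z' hz' => uniqueness hm l hl hz'.1 hz hz'.2 hphi⟩

/-- `α` of the group element. -/
noncomputable def alphaC (a b : ℝ) : ℂ := ((a : ℂ) + (a : ℂ)⁻¹) + (b : ℂ) * Complex.I

/-- `β` of the group element. -/
noncomputable def betaC (a b : ℝ) : ℂ := (b : ℂ) + ((a : ℂ) - (a : ℂ)⁻¹) * Complex.I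

lemma alphaC_eq (a b : ℝ) : alphaC a b = ((a + a⁻¹ : ℝ) : ℂ) + ((b : ℝ) : ℂ) * Complex.I := by
  rw [alphaC]; push_cast; ring

lemma betaC_eq (a b : ℝ) : betaC a b = ((b : ℝ) : ℂ) + ((a - a⁻¹ : ℝ) : ℂ) * Complex.I := by
  rw [betaC]; push_cast; ring

lemma conj_alphaC (a b : ℝ) :
    conj' (alphaC a b) = ((a + a⁻¹ : ℝ) : ℂ) - ((b : ℝ) : ℂ) * Complex.I := by
  rw [alphaC_eq]; simp [Complex.ext_iff]

lemma conj_betaC (a b : ℝ) :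
    conj' (betaC a b) = ((b : ℝ) : ℂ) - ((a - a⁻¹ : ℝ) : ℂ) * Complex.I := by
  rw [betaC_eq]; simp [Complex.ext_iff]

lemma re_im_mix (p q : ℝ) (z : ℂ) :
    (z * (((p : ℝ) : ℂ) - ((q : ℝ) : ℂ) * Complex.I)).re = z.re * p + z.im * q ∧
    (z * (((p : ℝ) : ℂ) - ((q : ℝ) : ℂ) * Complex.I)).im = z.im * p - z.re * q := by
  constructor <;>
    simp [Complex.mul_re, Complex.mul_im, Complex.sub_re, Complex.sub_im,
      Complex.ofReal_re, Complex.ofReal_im, Complex.I_re, Complex.I_im] <;> ring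

lemma AC_sq (a : ℝ) (ha : 0 < a) : (a + a⁻¹) ^ 2 - (a - a⁻¹) ^ 2 = 4 := by
  have h : a * a⁻¹ = 1 := mul_inv_cancel₀ (ne_of_gt ha)
  nlinarith [h]

lemma A_pos (a : ℝ) (ha : 0 < a) : 0 < a + a⁻¹ := by
  have := inv_pos.2 ha; linarith

lemma conj_alphaC_ne (a b : ℝ) (ha : 0 < a) : conj' (alphaC a b) ≠ 0 := by
  intro h
  have h2 : (conj' (alphaC a b)).re = 0 := by rw [h]; simp
  rw [conj_alphaC] at h2
  simp [Complex.sub_re, Complex.ofReal_re, Complex.mul_re, Complex.I_re, Complex.I_im,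
    Complex.ofReal_im] at h2
  have := A_pos a ha
  linarith

lemma alphaC_ne (a b : ℝ) (ha : 0 < a) : alphaC a b ≠ 0 := by
  intro h
  apply conj_alphaC_ne a b ha
  rw [h, map_zero]

lemma normSq_z_lt_one (a b : ℝ) (ha : 0 < a) :
    normSq (conj' (betaC a b) / conj' (alphaC a b)) < 1 := by
  rw [Complex.normSq_div]
  have hne := conj_alphaC_ne a b ha
  have hpos : 0 < normSq (conj' (alphaC a b)) := Complex.normSq_pos.2 hne
  rw [div_lt_one hpos]
  rw [conj_alphaC, conj_betaC]
  simp only [Complex.normSq_apply, Complex.sub_re, Complex.sub_im, Complex.mul_re,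
    Complex.mul_im, Complex.I_re, Complex.I_im, Complex.ofReal_re, Complex.ofReal_im]
  have := AC_sq a ha
  nlinarith

end HingeAux

namespace HingeAux

open Matrix

lemma pair_facts {m : ℕ} (hm : 1 ≤ m) (s : Matrix (Fin m) (Fin m) ℂ) (lam : Fin m → ℂ)
    (heval : ∀ x : ℂ, (x • (1 : Matrix (Fin m) (Fin m) ℂ) - s).det = ∏ i, (x - lam i))
    (hlam : ∀ i, normSq (lam i) < 1) (a b : ℝ) (ha : 0 < a) :
    ∃ z : ℂ, normSq z < 1 ∧
      conj' (betaC a b) = z * conj' (alphaC a b) ∧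
      IsUnit (conj' (betaC a b) • s +
        conj' (alphaC a b) • (1 : Matrix (Fin m) (Fin m) ℂ)) ∧
      (((alphaC a b • s + betaC a b • (1 : Matrix (Fin m) (Fin m) ℂ)) *
        (conj' (betaC a b) • s +
          conj' (alphaC a b) • (1 : Matrix (Fin m) (Fin m) ℂ))⁻¹).trace = 0 ↔
        ∑ i, (lam i + conj' z) / (1 + lam i * z) = 0) := by
  have hαne := conj_alphaC_ne a b ha
  have hα := alphaC_ne a b ha
  set z : ℂ := conj' (betaC a b) / conj' (alphaC a b) with hzdef
  have hcb : conj' (betaC a b) = z * conj' (alphaC a b) := (div_mul_cancel₀ _ hαne).symm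
  have hz : normSq z < 1 := normSq_z_lt_one a b ha
  have hfac : ∀ i, conj' (betaC a b) * lam i + conj' (alphaC a b) =
      conj' (alphaC a b) * (1 + lam i * z) := by
    intro i; rw [hcb]; ring
  have hdenom : ∀ i, conj' (betaC a b) * lam i + conj' (alphaC a b) ≠ 0 := by
    intro i
    rw [hfac i]
    exact mul_ne_zero hαne (denom_ne (hlam i) hz)
  refine ⟨z, hz, hcb, isUnit_affine s lam heval hdenom, ?_⟩
  rw [trace_formula s lam heval hm (alphaC a b) (betaC a b) _ _ hdenom]
  have hzbar : conj' z = betaC a b / alphaC a b := by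
    rw [hzdef, map_div₀]; simp
  have hterm : ∀ i : Fin m, (alphaC a b * lam i + betaC a b) /
      (conj' (betaC a b) * lam i + conj' (alphaC a b)) =
      (alphaC a b / conj' (alphaC a b)) * ((lam i + conj' z) / (1 + lam i * z)) := by
    intro i
    rw [hfac i, hzbar]
    have hd := denom_ne (hlam i) hz
    field_simp
  rw [Finset.sum_congr rfl fun i _ => hterm i, ← Finset.mul_sum]
  constructor
  · intro h
    rcases mul_eq_zero.1 h with h2 | h2
    · exact absurd h2 (div_ne_zero hα hαne)
    · exact h2
  · intro h; rw [h, mul_zero]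

lemma construct_pair {z : ℂ} (hz : normSq z < 1) :
    ∃ a b : ℝ, 0 < a ∧ conj' (betaC a b) = z * conj' (alphaC a b) := by
  set x := z.re with hx
  set y := z.im with hy
  set N := normSq z with hN
  have hNxy : N = x * x + y * y := Complex.normSq_apply z
  have hy1 : y < 1 := by nlinarith
  have hpt : 0 < 1 + N - 2 * y := by nlinarith
  have hpu : 0 < 1 - N := by linarith
  set t := Real.sqrt (1 + N - 2 * y) with htdef
  set uu := Real.sqrt (1 - N) with hudef
  have ht0 : 0 < t := Real.sqrt_pos.2 hpt
  have hu0 : 0 < uu := Real.sqrt_pos.2 hpu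
  have ht2 : t ^ 2 = 1 + N - 2 * y := Real.sq_sqrt hpt.le
  have hu2 : uu ^ 2 = 1 - N := Real.sq_sqrt hpu.le
  refine ⟨t / uu, 2 * x / (t * uu), div_pos ht0 hu0, ?_⟩
  have hainv : (t / uu)⁻¹ = uu / t := by rw [inv_div]
  have hA : t / uu + (t / uu)⁻¹ = (2 - 2 * y) / (t * uu) := by
    rw [hainv, div_add_div _ _ (ne_of_gt hu0) (ne_of_gt ht0)]
    rw [div_eq_div_iff (by positivity) (by positivity)]
    linear_combination (t * uu) * ht2 + (t * uu) * hu2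
  have hC : t / uu - (t / uu)⁻¹ = (2 * N - 2 * y) / (t * uu) := by
    rw [hainv, div_sub_div _ _ (ne_of_gt hu0) (ne_of_gt ht0)]
    rw [div_eq_div_iff (by positivity) (by positivity)]
    linear_combination (t * uu) * ht2 - (t * uu) * hu2
  rw [conj_betaC, conj_alphaC, hA, hC]
  apply Complex.ext
  · rw [(re_im_mix ((2 - 2*y)/(t*uu)) (2*x/(t*uu)) z).1]
    simp only [Complex.sub_re, Complex.ofReal_re, Complex.mul_re, Complex.I_re, Complex.I_im,
      Complex.ofReal_im, mul_zero, zero_mul, mul_one, sub_zero, zero_sub]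
    field_simp
    ring
  · rw [(re_im_mix ((2 - 2*y)/(t*uu)) (2*x/(t*uu)) z).2]
    simp only [Complex.sub_im, Complex.ofReal_im, Complex.mul_im, Complex.I_re, Complex.I_im,
      Complex.ofReal_re, mul_zero, zero_mul, mul_one, zero_sub, sub_zero]
    field_simp
    nlinarith [hNxy]

end HingeAux

namespace HingeAux

lemma recover_pair (a b : ℝ) (ha : 0 < a) {z : ℂ} (hz : normSq z < 1)
    (hcb : conj' (betaC a b) = z * conj' (alphaC a b)) :
    a = Real.sqrt (1 + normSq z - 2 * z.im) / Real.sqrt (1 - normSq z) ∧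
    b = 2 * z.re / (Real.sqrt (1 + normSq z - 2 * z.im) * Real.sqrt (1 - normSq z)) := by
  set x := z.re with hx
  set y := z.im with hy
  set N := normSq z with hN
  have hNxy : N = x * x + y * y := Complex.normSq_apply z
  have hy1 : y < 1 := by nlinarith
  have hpt : 0 < 1 + N - 2 * y := by nlinarith
  have hpu : 0 < 1 - N := by linarith
  set t := Real.sqrt (1 + N - 2 * y) with htdef
  set uu := Real.sqrt (1 - N) with hudef
  have ht0 : 0 < t := Real.sqrt_pos.2 hpt
  have hu0 : 0 < uu := Real.sqrt_pos.2 hpu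
  have ht2 : t ^ 2 = 1 + N - 2 * y := Real.sq_sqrt hpt.le
  have hu2 : uu ^ 2 = 1 - N := Real.sq_sqrt hpu.le
  have htu0 : 0 < t * uu := mul_pos ht0 hu0
  rw [conj_betaC, conj_alphaC] at hcb
  have eq1 : b = x * (a + a⁻¹) + y * b := by
    have h1 := congrArg Complex.re hcb
    rw [(re_im_mix (a + a⁻¹) b z).1] at h1
    simpa using h1
  have eq2 : -(a - a⁻¹) = y * (a + a⁻¹) - x * b := by
    have h1 := congrArg Complex.im hcb
    rw [(re_im_mix (a + a⁻¹) b z).2] at h1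
    simpa using h1
  have hAC := AC_sq a ha
  have hA0 := A_pos a ha
  have h1 : b * (1 - y) = x * (a + a⁻¹) := by linear_combination eq1
  have h2 : (a - a⁻¹) * (1 - y) = (a + a⁻¹) * (N - y) := by
    linear_combination (-(1 - y)) * eq2 + x * h1 + (-(a + a⁻¹)) * hNxy
  have h3 : (a + a⁻¹) ^ 2 * ((1 - N) * (1 + N - 2 * y)) = 4 * (1 - y) ^ 2 := by
    linear_combination ((1 - y) ^ 2) * hAC +
      ((a - a⁻¹) * (1 - y) + (a + a⁻¹) * (N - y)) * h2
  have htu2 : (t * uu) ^ 2 = (1 + N - 2 * y) * (1 - N) := by rw [mul_pow, ht2, hu2]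
  have h4 : ((a + a⁻¹) * (t * uu)) ^ 2 = (2 * (1 - y)) ^ 2 := by
    rw [mul_pow, htu2]; linear_combination h3
  have h5 : (a + a⁻¹) * (t * uu) = 2 * (1 - y) := by
    have h6 : ((a + a⁻¹) * (t * uu) - 2 * (1 - y)) * ((a + a⁻¹) * (t * uu) + 2 * (1 - y)) = 0 := by
      linear_combination h4
    rcases mul_eq_zero.1 h6 with h7 | h7
    · linarith
    · nlinarith [mul_pos hA0 htu0]
  constructor
  · rw [eq_div_iff (ne_of_gt hu0)]
    have hC5 : (a - a⁻¹) * (t * uu) = 2 * (N - y) := by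
      have h8 : (1 - y) * ((a - a⁻¹) * (t * uu) - 2 * (N - y)) = 0 := by
        linear_combination (t * uu) * h2 + (N - y) * h5
      rcases mul_eq_zero.1 h8 with h9 | h9
      · linarith
      · linarith
    have h10 : 2 * a * (t * uu) = 2 * t ^ 2 := by
      linear_combination h5 + hC5 - 2 * ht2
    have h11 : (a * uu - t) * (2 * t) = 0 := by linear_combination h10
    rcases mul_eq_zero.1 h11 with h12 | h12
    · linarith
    · linarith
  · rw [eq_div_iff (ne_of_gt htu0)]
    have h8 : (1 - y) * (b * (t * uu) - 2 * x) = 0 := by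
      linear_combination (t * uu) * h1 + x * h5
    rcases mul_eq_zero.1 h8 with h9 | h9
    · linarith
    · linarith

end HingeAux


/-- The action on an `m × m` complex matrix `s` of the element of the group `N`
of disk automorphisms with parameters `a > 0`, `b ∈ ℝ`, given by the linear
fractional transformation `s ↦ (α·s + β·1)(conj β·s + conj α·1)⁻¹` where
`α = (a + a⁻¹) + b·i` and `β = b + (a - a⁻¹)·i`. -/
noncomputable def hingeLFT (m : ℕ) (s : Matrix (Fin m) (Fin m) ℂ) (a b : ℝ) :
    Matrix (Fin m) (Fin m) ℂ :=
  (((((a : ℂ) + (a : ℂ)⁻¹) + (b : ℂ) * Complex.I) • s +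
      ((b : ℂ) + ((a : ℂ) - (a : ℂ)⁻¹) * Complex.I) • (1 : Matrix (Fin m) (Fin m) ℂ)) *
  ((starRingEnd ℂ ((b : ℂ) + ((a : ℂ) - (a : ℂ)⁻¹) * Complex.I)) • s +
      (starRingEnd ℂ (((a : ℂ) + (a : ℂ)⁻¹) + (b : ℂ) * Complex.I)) •
        (1 : Matrix (Fin m) (Fin m) ℂ))⁻¹)

/-- For any square complex matrix `s` with spectrum in the open unit disk,
there is a unique element of the group `N` of disk automorphisms whose linear
fractional action normalizes `s` to have vanishing trace. -/
theorem unique_trace_normalizing_disk_automorphism (m : ℕ) (hm : 1 ≤ m)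
    (s : Matrix (Fin m) (Fin m) ℂ)
    (hs : ∀ lam : ℂ, (s - lam • (1 : Matrix (Fin m) (Fin m) ℂ)).det = 0 →
      ‖lam‖ < 1) :
    ∃! p : ℝ × ℝ, 0 < p.1 ∧
      IsUnit ((starRingEnd ℂ ((p.2 : ℂ) + ((p.1 : ℂ) - (p.1 : ℂ)⁻¹) * Complex.I)) • s +
        (starRingEnd ℂ (((p.1 : ℂ) + (p.1 : ℂ)⁻¹) + (p.2 : ℂ) * Complex.I)) •
          (1 : Matrix (Fin m) (Fin m) ℂ)) ∧
      (hingeLFT m s p.1 p.2).trace = 0 := by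
    classical
  obtain ⟨lam, heval⟩ := HingeAux.spec_exists s
  have hlam : ∀ i, Complex.normSq (lam i) < 1 := HingeAux.norm_lam_lt s lam heval hs
  obtain ⟨z₀, ⟨hz₀, hphi₀⟩, huniq⟩ := HingeAux.exists_unique_phi hm lam hlam
  obtain ⟨a₀, b₀, ha₀, hcb₀⟩ := HingeAux.construct_pair hz₀
  obtain ⟨z₁, hz₁, hcb₁, hunit₁, hiff₁⟩ := HingeAux.pair_facts hm s lam heval hlam a₀ b₀ ha₀
  have hz₁₀ : z₁ = z₀ := by
    have hne := HingeAux.conj_alphaC_ne a₀ b₀ ha₀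
    exact mul_right_cancel₀ hne (hcb₁.symm.trans hcb₀)
  obtain ⟨ha₀eq, hb₀eq⟩ := HingeAux.recover_pair a₀ b₀ ha₀ hz₀ hcb₀
  refine ⟨(a₀, b₀), ⟨ha₀, ?_, ?_⟩, ?_⟩
  · exact hunit₁
  · show ((HingeAux.alphaC a₀ b₀ • s +
        HingeAux.betaC a₀ b₀ • (1 : Matrix (Fin m) (Fin m) ℂ)) *
      ((starRingEnd ℂ) (HingeAux.betaC a₀ b₀) • s +
        (starRingEnd ℂ) (HingeAux.alphaC a₀ b₀) • (1 : Matrix (Fin m) (Fin m) ℂ))⁻¹).trace = 0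
    apply hiff₁.2
    rw [hz₁₀]
    exact hphi₀
  · rintro ⟨a, b⟩ ⟨hpos, hunit', htr'⟩
    obtain ⟨z, hz, hcb, hunit, hiff⟩ := HingeAux.pair_facts hm s lam heval hlam a b hpos
    have hphiz : ∑ i, (lam i + (starRingEnd ℂ) z) / (1 + lam i * z) = 0 := by
      apply hiff.1
      exact htr'
    have hzz : z = z₀ := huniq z ⟨hz, hphiz⟩
    rw [hzz] at hcb
    obtain ⟨haeq, hbeq⟩ := HingeAux.recover_pair a b hpos hz₀ hcb
    have : a = a₀ := by rw [haeq, ha₀eq]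
    have hb : b = b₀ := by rw [hbeq, hb₀eq]
    exact Prod.ext this hb
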